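/- Let a and b be coprime positive integers and let P ∈ ℤ[X] be the polynomial satisfying P·(X^a − 1)·(X^b − 1) = (X^{ab} − 1)·(X − 1) in ℤ[X]. If a and b are both odd, then P evaluated at −1 equals 1. If a is odd and b is even, then P evaluated at −1 equals a. -/
import Mathlib


open Polynomial

/-- For coprime positive integers `a, b`, let `P ∈ ℤ[X]` satisfy
`P·(X^a − 1)·(X^b − 1) = (X^{ab} − 1)·(X − 1)` (so `P` is the Alexander polynomial of
the `(a,b)`-torus knot). If `a` and `b` are both odd then `P(−1) = 1`; if `a` is odd
and `b` is even then `P(−1) = a`. -/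
theorem stmt17 (a b : ℕ) (ha : 0 < a) (hb : 0 < b) (hab : Nat.Coprime a b)
    (P : Polynomial ℤ)
    (hP : P * (((X : Polynomial ℤ) ^ a - 1) * (X ^ b - 1)) =
      (X ^ (a * b) - 1) * (X - 1)) :
    (Odd a → Odd b → P.eval (-1) = 1) ∧
    (Odd a → Even b → P.eval (-1) = (a : ℤ)) := by
  constructor
  · intro haodd hbodd
    have h := congrArg (eval (-1 : ℤ)) hP
    simp only [eval_mul, eval_sub, eval_pow, eval_X, eval_one] at h
    rw [haodd.neg_one_pow, hbodd.neg_one_pow, (haodd.mul hbodd).neg_one_pow] at h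
    linarith
  · intro haodd hbeven
    -- factor X^{ab} - 1 = (∑ i<a, (X^b)^i) * (X^b - 1)
    have hfac : (X : Polynomial ℤ) ^ (a * b) - 1 =
        (∑ i ∈ Finset.range a, ((X : Polynomial ℤ) ^ b) ^ i) * (X ^ b - 1) := by
      rw [geom_sum_mul, ← pow_mul, mul_comm b a]
    have hne : ((X : Polynomial ℤ) ^ b - 1) ≠ 0 := by
      intro h
      have := congrArg (eval (2 : ℤ)) h
      simp at this
      have : (2 : ℤ) ^ b ≥ 2 ^ 1 := pow_le_pow_right₀ (by norm_num) hb
      omega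
    have hcancel : P * ((X : Polynomial ℤ) ^ a - 1) =
        (∑ i ∈ Finset.range a, ((X : Polynomial ℤ) ^ b) ^ i) * (X - 1) := by
      apply mul_right_cancel₀ hne
      rw [mul_assoc, hP, hfac]; ring
    have h := congrArg (eval (-1 : ℤ)) hcancel
    simp only [eval_mul, eval_sub, eval_pow, eval_X, eval_one, eval_finset_sum] at h
    rw [haodd.neg_one_pow, hbeven.neg_one_pow] at h
    simp at h
    linarith
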